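/- Let r ≥ 3 be odd, q = e^{2πi/r}, and r ≤ m ≤ 2r-2. On the 2r-dimensional space P_m with basis {a_j, x_k, y_k, b_j : 0 ≤ j ≤ 2r-m-2, 0 ≤ k ≤ m-r}, define the action of K, E, F by the explicit formulas: K·a_j = q^{-m-2j-2}a_j, E·a_j = -[j][m+j+1]a_{j-1}, F·a_j = a_{j+1}; K·x_k = q^{m-2k}x_k, E·x_k = [k][m-k+1]x_{k-1}, F·x_k = x_{k+1} for k < m-r and F·x_{m-r} = a_0; K·y_k = q^{m-2k}y_k, E·y_0 = a_{2r-m-2}, E·y_k = [k][m-k+1]y_{k-1} for k > 0, F·y_k = y_{k+1}; K·b_j = q^{-m-2j-2}b_j, E·b_0 = x_{m-r}, E·b_j = a_{j-1} - [j][m+j+1]b_{j-1} for j > 0, F·b_j = b_{j+1} for j < 2r-m-2 and F·b_{2r-m-2} = y_0 (with all out-of-range basis vectors equal to 0). Then the quantum Casimir C = EF + (q^{-1}K + qK^{-1})/(q-q^{-1})^2 satisfies (C - β_m)^2 = 0 on P_m but C - β_m ≠ 0, where β_m = (q^{m+1} + q^{-m-1})/(q - q^{-1})^2. -/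

import Mathlib

open Matrix
open scoped Classical

/-- Quantum integer `[n] = (q^n - q^{-n})/(q - q^{-1})`. -/
noncomputable def qint (q : ℂ) (n : ℤ) : ℂ := (q ^ n - q ^ (-n)) / (q - q⁻¹)

/-- Basis index type for the projective module `P_m`: vectors
`a_j` (`0 ≤ j ≤ 2r-m-2`), `x_k` (`0 ≤ k ≤ m-r`), `y_k` (`0 ≤ k ≤ m-r`),
`b_j` (`0 ≤ j ≤ 2r-m-2`). -/
abbrev PIdx (r m : ℕ) :=
  Fin (2 * r - m - 1) ⊕ (Fin (m - r + 1) ⊕ (Fin (m - r + 1) ⊕ Fin (2 * r - m - 1)))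

/-- Action of `K` on `P_m` (diagonal). -/
noncomputable def KP (q : ℂ) (r m : ℕ) : Matrix (PIdx r m) (PIdx r m) ℂ :=
  Matrix.diagonal fun i => match i with
    | Sum.inl j => q ^ (-(m : ℤ) - 2 * ((j : ℕ) : ℤ) - 2)
    | Sum.inr (Sum.inl k) => q ^ ((m : ℤ) - 2 * ((k : ℕ) : ℤ))
    | Sum.inr (Sum.inr (Sum.inl k)) => q ^ ((m : ℤ) - 2 * ((k : ℕ) : ℤ))
    | Sum.inr (Sum.inr (Sum.inr j)) => q ^ (-(m : ℤ) - 2 * ((j : ℕ) : ℤ) - 2)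

/-- Inverse of the action of `K` on `P_m`. -/
noncomputable def KPinv (q : ℂ) (r m : ℕ) : Matrix (PIdx r m) (PIdx r m) ℂ :=
  Matrix.diagonal fun i => match i with
    | Sum.inl j => q ^ ((m : ℤ) + 2 * ((j : ℕ) : ℤ) + 2)
    | Sum.inr (Sum.inl k) => q ^ (-((m : ℤ) - 2 * ((k : ℕ) : ℤ)))
    | Sum.inr (Sum.inr (Sum.inl k)) => q ^ (-((m : ℤ) - 2 * ((k : ℕ) : ℤ)))
    | Sum.inr (Sum.inr (Sum.inr j)) => q ^ ((m : ℤ) + 2 * ((j : ℕ) : ℤ) + 2)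

/-- Action of `E` on `P_m`:
`E·a_j = -[j][m+j+1]a_{j-1}`, `E·x_k = [k][m-k+1]x_{k-1}`,
`E·y_0 = a_{2r-m-2}`, `E·y_k = [k][m-k+1]y_{k-1}` (`k > 0`),
`E·b_0 = x_{m-r}`, `E·b_j = a_{j-1} - [j][m+j+1]b_{j-1}` (`j > 0`). -/
noncomputable def EP (q : ℂ) (r m : ℕ) : Matrix (PIdx r m) (PIdx r m) ℂ :=
  fun i j => match i, j with
    | Sum.inl i, Sum.inl j =>
        if (i : ℕ) + 1 = (j : ℕ)
        then -(qint q ((j : ℕ) : ℤ) * qint q ((m : ℤ) + ((j : ℕ) : ℤ) + 1)) else 0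
    | Sum.inr (Sum.inl i), Sum.inr (Sum.inl k) =>
        if (i : ℕ) + 1 = (k : ℕ)
        then qint q ((k : ℕ) : ℤ) * qint q ((m : ℤ) - ((k : ℕ) : ℤ) + 1) else 0
    | Sum.inl i, Sum.inr (Sum.inr (Sum.inl k)) =>
        if (k : ℕ) = 0 ∧ (i : ℕ) = 2 * r - m - 2 then 1 else 0
    | Sum.inr (Sum.inr (Sum.inl i)), Sum.inr (Sum.inr (Sum.inl k)) =>
        if (i : ℕ) + 1 = (k : ℕ)
        then qint q ((k : ℕ) : ℤ) * qint q ((m : ℤ) - ((k : ℕ) : ℤ) + 1) else 0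
    | Sum.inr (Sum.inl i), Sum.inr (Sum.inr (Sum.inr j)) =>
        if (j : ℕ) = 0 ∧ (i : ℕ) = m - r then 1 else 0
    | Sum.inl i, Sum.inr (Sum.inr (Sum.inr j)) =>
        if (i : ℕ) + 1 = (j : ℕ) then 1 else 0
    | Sum.inr (Sum.inr (Sum.inr i)), Sum.inr (Sum.inr (Sum.inr j)) =>
        if (i : ℕ) + 1 = (j : ℕ)
        then -(qint q ((j : ℕ) : ℤ) * qint q ((m : ℤ) + ((j : ℕ) : ℤ) + 1)) else 0
    | _, _ => 0

/-- Action of `F` on `P_m`: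
`F·a_j = a_{j+1}`, `F·x_k = x_{k+1}` (`k < m-r`), `F·x_{m-r} = a_0`,
`F·y_k = y_{k+1}`, `F·b_j = b_{j+1}` (`j < 2r-m-2`), `F·b_{2r-m-2} = y_0`. -/
noncomputable def FP (q : ℂ) (r m : ℕ) : Matrix (PIdx r m) (PIdx r m) ℂ :=
  fun i j => match i, j with
    | Sum.inl i, Sum.inl j => if (i : ℕ) = (j : ℕ) + 1 then 1 else 0
    | Sum.inr (Sum.inl i), Sum.inr (Sum.inl k) => if (i : ℕ) = (k : ℕ) + 1 then 1 else 0
    | Sum.inl i, Sum.inr (Sum.inl k) =>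
        if (k : ℕ) = m - r ∧ (i : ℕ) = 0 then 1 else 0
    | Sum.inr (Sum.inr (Sum.inl i)), Sum.inr (Sum.inr (Sum.inl k)) =>
        if (i : ℕ) = (k : ℕ) + 1 then 1 else 0
    | Sum.inr (Sum.inr (Sum.inr i)), Sum.inr (Sum.inr (Sum.inr j)) =>
        if (i : ℕ) = (j : ℕ) + 1 then 1 else 0
    | Sum.inr (Sum.inr (Sum.inl i)), Sum.inr (Sum.inr (Sum.inr j)) =>
        if (j : ℕ) = 2 * r - m - 2 ∧ (i : ℕ) = 0 then 1 else 0
    | _, _ => 0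

lemma qmul {q : ℂ} (hq0 : q ≠ 0) (a b : ℤ) : q ^ a * q ^ b = q ^ (a + b) :=
  (zpow_add₀ hq0 a b).symm
lemma qmul1 {q : ℂ} (hq0 : q ≠ 0) (a : ℤ) : q * q ^ a = q ^ (1 + a) := by
  rw [zpow_add₀ hq0, zpow_one]
lemma qmul1' {q : ℂ} (hq0 : q ≠ 0) (a : ℤ) : q⁻¹ * q ^ a = q ^ (-1 + a) := by
  rw [zpow_add₀ hq0, _root_.zpow_neg, zpow_one]
lemma qinv (q : ℂ) (a : ℤ) : (q ^ a)⁻¹ = q ^ (-a) := (_root_.zpow_neg q a).symm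

lemma key_ab {q : ℂ} (hq0 : q ≠ 0) (hd : q - q⁻¹ ≠ 0) (s M : ℤ) :
    -(qint q (s+1) * qint q (M + (s+1) + 1)) +
      ((q - q⁻¹) ^ 2)⁻¹ * (q⁻¹ * q ^ (-M - 2*s - 2) + q * q ^ (M + 2*s + 2)) -
      (q ^ (M+1) + q ^ (-(M+1))) / (q - q⁻¹) ^ 2 = 0 := by
  have ha : q ^ (s+1) ≠ 0 := zpow_ne_zero _ hq0
  have hb : q ^ (M+1) ≠ 0 := zpow_ne_zero _ hq0
  have e1 : q ^ (M + (s+1) + 1) = q ^ (s+1) * q ^ (M+1) := by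
    rw [qmul hq0]; congr 1; ring
  have e2 : q ^ (-(M + (s+1) + 1)) = (q ^ (s+1) * q ^ (M+1))⁻¹ := by
    rw [qmul hq0, qinv]; congr 1; ring
  have e3 : q ^ (-(s+1)) = (q ^ (s+1))⁻¹ := by rw [qinv]
  have e4 : q⁻¹ * q ^ (-M - 2*s - 2) = (q ^ (s+1) * (q ^ (s+1) * q ^ (M+1)))⁻¹ := by
    rw [qmul1' hq0, qmul hq0, qmul hq0, qinv]; congr 1; ring
  have e5 : q * q ^ (M + 2*s + 2) = q ^ (s+1) * (q ^ (s+1) * q ^ (M+1)) := by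
    rw [qmul1 hq0, qmul hq0, qmul hq0]; congr 1; ring
  have e6 : q ^ (-(M+1)) = (q ^ (M+1))⁻¹ := by rw [qinv]
  unfold qint
  rw [e1, e2, e3, e4, e5, e6]
  clear e1 e2 e3 e4 e5 e6
  generalize hA : q ^ (s+1) = a at ha ⊢
  generalize hB : q ^ (M+1) = b at hb ⊢
  generalize hD : q - q⁻¹ = d at hd ⊢
  field_simp
  ring_nf

lemma key_xy {q : ℂ} (hq0 : q ≠ 0) (hd : q - q⁻¹ ≠ 0) (s M : ℤ) :
    qint q (s+1) * qint q (M - (s+1) + 1) +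
      ((q - q⁻¹) ^ 2)⁻¹ * (q⁻¹ * q ^ (M - 2*s) + q * q ^ (-(M - 2*s))) -
      (q ^ (M+1) + q ^ (-(M+1))) / (q - q⁻¹) ^ 2 = 0 := by
  have ha : q ^ (s+1) ≠ 0 := zpow_ne_zero _ hq0
  have hb : q ^ (M+1) ≠ 0 := zpow_ne_zero _ hq0
  have e1 : q ^ (M - (s+1) + 1) = q ^ (M+1) * (q ^ (s+1))⁻¹ := by
    rw [qinv, qmul hq0]; congr 1; ring
  have e2 : q ^ (-(M - (s+1) + 1)) = q ^ (s+1) * (q ^ (M+1))⁻¹ := by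
    rw [qinv, qmul hq0]; congr 1; ring
  have e3 : q ^ (-(s+1)) = (q ^ (s+1))⁻¹ := by rw [qinv]
  have e4 : q⁻¹ * q ^ (M - 2*s) = q ^ (M+1) * ((q ^ (s+1))⁻¹ * (q ^ (s+1))⁻¹) := by
    rw [qmul1' hq0, qinv, qmul hq0, qmul hq0]; congr 1; ring
  have e5 : q * q ^ (-(M - 2*s)) = q ^ (s+1) * (q ^ (s+1) * (q ^ (M+1))⁻¹) := by
    rw [qmul1 hq0, qinv, qmul hq0, qmul hq0]; congr 1; ring
  have e6 : q ^ (-(M+1)) = (q ^ (M+1))⁻¹ := by rw [qinv]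
  unfold qint
  rw [e1, e2, e3, e4, e5, e6]
  clear e1 e2 e3 e4 e5 e6
  generalize hA : q ^ (s+1) = a at ha ⊢
  generalize hB : q ^ (M+1) = b at hb ⊢
  generalize hD : q - q⁻¹ = d at hd ⊢
  field_simp
  ring_nf

lemma key_bd {q : ℂ} (hq0 : q ≠ 0) (E M : ℤ) (h : q ^ (E-1) = q ^ (M+1)) :
    ((q - q⁻¹) ^ 2)⁻¹ * (q⁻¹ * q ^ E + q * q ^ (-E)) -
      (q ^ (M+1) + q ^ (-(M+1))) / (q - q⁻¹) ^ 2 = 0 := by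
  have e1 : q⁻¹ * q ^ E = q ^ (M+1) := by
    rw [qmul1' hq0, show -1 + E = E - 1 by ring, h]
  have e2 : q * q ^ (-E) = q ^ (-(M+1)) := by
    rw [qmul1 hq0, show (1:ℤ) + -E = -(E-1) by ring, _root_.zpow_neg, h, _root_.zpow_neg]
  rw [e1, e2, div_eq_inv_mul]; ring

lemma key_bd' {q : ℂ} (hq0 : q ≠ 0) (E M : ℤ) (h : q ^ (E-1) = q ^ (-(M+1))) :
    ((q - q⁻¹) ^ 2)⁻¹ * (q⁻¹ * q ^ E + q * q ^ (-E)) -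
      (q ^ (M+1) + q ^ (-(M+1))) / (q - q⁻¹) ^ 2 = 0 := by
  have e1 : q⁻¹ * q ^ E = q ^ (-(M+1)) := by
    rw [qmul1' hq0, show -1 + E = E - 1 by ring, h]
  have e2 : q * q ^ (-E) = q ^ (M+1) := by
    rw [qmul1 hq0, show (1:ℤ) + -E = -(E-1) by ring, _root_.zpow_neg, h, _root_.zpow_neg, inv_inv]
  rw [e1, e2, div_eq_inv_mul]; ring

lemma fin_sum_pin {n t : ℕ} (f : Fin n → ℂ) (h : ∀ k : Fin n, (k:ℕ) ≠ t → f k = 0) :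
    (∑ k : Fin n, f k) = if ht : t < n then f ⟨t, ht⟩ else 0 := by
  split
  · next ht =>
    rw [Finset.sum_eq_single (⟨t, ht⟩ : Fin n)]
    · intro k _ hk; exact h k (fun hc => hk (Fin.ext hc))
    · intro hk; exact absurd (Finset.mem_univ _) hk
  · next ht => exact Finset.sum_eq_zero fun k _ => h k (by have := k.isLt; omega)

lemma fin_sum_if {n t : ℕ} (f : Fin n → ℂ) :
    (∑ k : Fin n, if (k:ℕ) = t then f k else 0) = if ht : t < n then f ⟨t, ht⟩ else 0 := by
  rw [fin_sum_pin (fun k => if (k:ℕ) = t then f k else 0) (fun k hk => if_neg hk)]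
  split <;> simp

lemma fin_sum_if' {n t : ℕ} (f : Fin n → ℂ) :
    (∑ k : Fin n, if t = (k:ℕ) then f k else 0) = if ht : t < n then f ⟨t, ht⟩ else 0 := by
  rw [fin_sum_pin (fun k => if t = (k:ℕ) then f k else 0) (fun k hk => if_neg (fun h => hk h.symm))]
  split <;> simp

noncomputable def Mmat (r m : ℕ) : Matrix (PIdx r m) (PIdx r m) ℂ :=
  fun i j => match i, j with
    | Sum.inl i, Sum.inr (Sum.inr (Sum.inr j)) => if (i:ℕ) = (j:ℕ) then 1 else 0
    | _, _ => 0

lemma fin_sum_const_ite {n : ℕ} (p : Prop) [Decidable p] (f g : Fin n → ℂ) :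
    (∑ k : Fin n, if p then f k else g k) = if p then ∑ k, f k else ∑ k, g k := by
  split <;> rfl

set_option maxHeartbeats 2000000 in
lemma Nval (r m : ℕ) (hr : 3 ≤ r) (hm1 : r ≤ m) (hm2 : m ≤ 2 * r - 2)
    (q : ℂ) (hq0 : q ≠ 0) (hd : q - q⁻¹ ≠ 0)
    (hper : ∀ a k : ℤ, q ^ (a + k * (r:ℤ)) = q ^ a) :
    EP q r m * FP q r m + ((q - q⁻¹) ^ 2)⁻¹ • (q⁻¹ • KP q r m + q • KPinv q r m) -
        ((q ^ ((m : ℤ) + 1) + q ^ (-((m : ℤ) + 1))) / (q - q⁻¹) ^ 2) • 1 = Mmat r m := by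
  ext i j
  rcases i with ii | ii | ii | ii <;> rcases j with jj | jj | jj | jj <;>
    (have hi := ii.isLt
     have hj := jj.isLt
     simp only [Matrix.sub_apply, Matrix.add_apply, Matrix.smul_apply, smul_eq_mul,
       Matrix.mul_apply, Fintype.sum_sum_type, EP, FP, KP, KPinv, Mmat,
       Matrix.diagonal_apply, Matrix.one_apply, Sum.inl.injEq, Sum.inr.injEq, reduceCtorEq,
       Fin.ext_iff, ite_and, mul_ite, ite_mul, mul_zero, zero_mul, mul_one, one_mul,
       Finset.sum_const_zero, add_zero, zero_add, if_false, fin_sum_const_ite,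
       fin_sum_if, fin_sum_if'])
  all_goals first
    | rfl
    | (split_ifs <;>
        first
          | (exfalso; omega)
          | rfl
          | (norm_num; done)
          | (rw [(by omega : ((ii:ℕ):ℤ) = ((jj:ℕ):ℤ))]; push_cast;
             linear_combination key_ab hq0 hd ((jj:ℕ):ℤ) (m:ℤ))
          | (rw [(by omega : ((ii:ℕ):ℤ) = ((jj:ℕ):ℤ))]; push_cast;
             linear_combination key_xy hq0 hd ((jj:ℕ):ℤ) (m:ℤ))
          | (rw [show ((m:ℤ) + 2 * ((ii:ℕ):ℤ) + 2) = -(-(m:ℤ) - 2*((ii:ℕ):ℤ) - 2) by ring];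
             linear_combination key_bd hq0 (-(m:ℤ) - 2*((ii:ℕ):ℤ) - 2) (m:ℤ) (by
               rw [show (-(m:ℤ) - 2*((ii:ℕ):ℤ) - 2) - 1 = ((m:ℤ)+1) + (-4)*(r:ℤ) by omega, hper]))
          | (linear_combination key_bd' hq0 ((m:ℤ) - 2*((ii:ℕ):ℤ)) (m:ℤ) (by
               rw [show ((m:ℤ) - 2*((ii:ℕ):ℤ)) - 1 = (-((m:ℤ)+1)) + 2*(r:ℤ) by omega, hper])))

/-- On the indecomposable projective module `P_m`, the quantum Casimir
`C = EF + (q^{-1}K + qK^{-1})/(q-q^{-1})²` satisfies `(C - β_m)² = 0` but `C - β_m ≠ 0`,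
where `β_m = (q^{m+1} + q^{-m-1})/(q-q^{-1})²`. -/
theorem casimir_on_projective (r m : ℕ) (hr : 3 ≤ r) (hodd : Odd r)
    (hm1 : r ≤ m) (hm2 : m ≤ 2 * r - 2)
    (q : ℂ) (hq : q = Complex.exp (2 * Real.pi * Complex.I / r)) :
    (EP q r m * FP q r m + ((q - q⁻¹) ^ 2)⁻¹ • (q⁻¹ • KP q r m + q • KPinv q r m) -
          ((q ^ ((m : ℤ) + 1) + q ^ (-((m : ℤ) + 1))) / (q - q⁻¹) ^ 2) • 1) ^ 2 = 0 ∧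
      EP q r m * FP q r m + ((q - q⁻¹) ^ 2)⁻¹ • (q⁻¹ • KP q r m + q • KPinv q r m) -
          ((q ^ ((m : ℤ) + 1) + q ^ (-((m : ℤ) + 1))) / (q - q⁻¹) ^ 2) • 1 ≠ 0 := by
  have hr0 : (r : ℂ) ≠ 0 := Nat.cast_ne_zero.mpr (by omega)
  have hq0 : q ≠ 0 := by rw [hq]; exact Complex.exp_ne_zero _
  have hqr : q ^ ((r:ℕ):ℤ) = 1 := by
    rw [zpow_natCast, hq, ← Complex.exp_nat_mul, mul_div_cancel₀ _ hr0, Complex.exp_two_pi_mul_I]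
  have hq2 : q ^ 2 ≠ 1 := by
    rw [hq, ← Complex.exp_nat_mul]
    intro h
    rw [Complex.exp_eq_one_iff] at h
    obtain ⟨n, hn⟩ := h
    have hpi : (2 * (Real.pi:ℂ) * Complex.I) ≠ 0 := by
      simp [Real.pi_ne_zero, Complex.I_ne_zero]
    field_simp at hn
    have h2 : ((2:ℂ)) * (2 * Real.pi * Complex.I) = ((n:ℂ) * r) * (2 * Real.pi * Complex.I) := by
      linear_combination (2 * (Real.pi:ℂ) * Complex.I) * hn
    have h3 : ((2:ℂ)) = (n:ℂ) * r := mul_right_cancel₀ hpi h2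
    have h4 : (2:ℤ) = n * r := by exact_mod_cast h3
    have h5 : (3:ℤ) ≤ r := by exact_mod_cast hr
    rcases le_or_gt n 0 with h6 | h6
    · have : n * (r:ℤ) ≤ 0 := mul_nonpos_iff.mpr (Or.inr ⟨h6, by linarith⟩)
      omega
    · have : (r:ℤ) ≤ n * r := le_mul_of_one_le_left (by linarith) h6
      omega
  have hd : q - q⁻¹ ≠ 0 := by
    intro h
    apply hq2
    have h1 : q = q⁻¹ := sub_eq_zero.mp h
    rw [sq]
    nth_rewrite 1 [h1]
    exact inv_mul_cancel₀ hq0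
  have hper : ∀ a k : ℤ, q ^ (a + k * (r:ℤ)) = q ^ a := by
    intro a k
    rw [zpow_add₀ hq0, mul_comm k, _root_.zpow_mul, hqr, _root_.one_zpow, mul_one]
  have hN := Nval r m hr hm1 hm2 q hq0 hd hper
  rw [hN]
  constructor
  · ext i j
    rw [pow_two, Matrix.mul_apply]
    rw [Matrix.zero_apply]
    apply Finset.sum_eq_zero
    intro k _
    rcases k with k | k | k | k <;> rcases i with i' | i' | i' | i' <;>
      rcases j with j' | j' | j' | j' <;> simp [Mmat]
  · intro h0
    have h1 : (2:ℕ) ≤ 2 * r - m := by omega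
    have := congrFun (congrFun h0 (Sum.inl ⟨0, by omega⟩))
      (Sum.inr (Sum.inr (Sum.inr ⟨0, by omega⟩)))
    simp [Mmat] at this
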